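/- arXiv:2412.16465 — 2 statements merged into one kernel-verified Lean document; each statement's English description precedes it below -/
import Mathlib

section
/- In an odd wheel W_k with k ≥ 5 (k odd), every edge of the rim is not removable and every spoke (edge incident with the hub) is removable. -/
open SimpleGraph

universe u

/-- A graph has a perfect matching. -/
def HasPM {V : Type u} (G : SimpleGraph V) : Prop :=
  ∃ M : G.Subgraph, M.IsPerfectMatching

/-- A connected graph with at least two vertices in which every edge
lies in a perfect matching. -/
def MatchingCovered {V : Type u} (G : SimpleGraph V) : Prop :=
  G.Connected ∧ 2 ≤ Nat.card V ∧
    ∀ e ∈ G.edgeSet, ∃ M : G.Subgraph, M.IsPerfectMatching ∧ e ∈ M.edgeSet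

/-- Number of odd connected components. -/
noncomputable def oddComps {V : Type u} (G : SimpleGraph V) : ℕ :=
  Nat.card {c : G.ConnectedComponent // Odd (Nat.card c.supp)}

/-- An edge is removable if its deletion leaves a matching covered graph. -/
def Removable {V : Type u} (G : SimpleGraph V) (e : Sym2 V) : Prop :=
  e ∈ G.edgeSet ∧ MatchingCovered (G.deleteEdges {e})

/-- Removable, with absent edges counted as removable. -/
def RemovableExt {V : Type u} (G : SimpleGraph V) (e : Sym2 V) : Prop :=
  e ∉ G.edgeSet ∨ Removable G e

/-- Degree of a vertex. -/
noncomputable def degN {V : Type u} (G : SimpleGraph V) (v : V) : ℕ :=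
  Nat.card (G.neighborSet v)

/-- A graph on at least four vertices is bicritical if deleting any two
distinct vertices leaves a graph with a perfect matching. -/
def Bicritical {V : Type u} (G : SimpleGraph V) : Prop :=
  4 ≤ Nat.card V ∧ ∀ u v : V, u ≠ v → HasPM (G.induce ({u, v}ᶜ : Set V))

/-- A barrier: nonempty set `B` with `o(G - B) = |B|`. -/
def IsBarrier {V : Type u} (G : SimpleGraph V) (B : Set V) : Prop :=
  B.Nonempty ∧ oddComps (G.induce (Bᶜ : Set V)) = B.ncard

/-- 2-connectedness. -/
def TwoConnected {V : Type u} (G : SimpleGraph V) : Prop :=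
  3 ≤ Nat.card V ∧ ∀ s : Set V, s.ncard ≤ 1 → (G.induce (sᶜ : Set V)).Connected

/-- 3-connectedness. -/
def ThreeConnected {V : Type u} (G : SimpleGraph V) : Prop :=
  4 ≤ Nat.card V ∧ ∀ s : Set V, s.ncard ≤ 2 → (G.induce (sᶜ : Set V)).Connected

/-- A brick is a 3-connected bicritical graph. -/
def IsBrick {V : Type u} (G : SimpleGraph V) : Prop :=
  ThreeConnected G ∧ Bicritical G

/-- Map a vertex to the vertex set of the contraction `G/X`. -/
noncomputable def toContract {V : Type u} (X : Set V) (v : V) : ↥(Xᶜ) ⊕ Unit := by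
  classical exact if h : v ∈ X then Sum.inr () else Sum.inl ⟨v, h⟩

/-- Contraction `G/X` of the set `X` to a single vertex. -/
noncomputable def contract {V : Type u} (G : SimpleGraph V) (X : Set V) :
    SimpleGraph (↥(Xᶜ) ⊕ Unit) :=
  SimpleGraph.fromRel (fun a b =>
    ∃ x y, G.Adj x y ∧ a = toContract X x ∧ b = toContract X y)

/-- The edge cut `∂(X)`. -/
def cutEdges {V : Type u} (G : SimpleGraph V) (X : Set V) : Set (Sym2 V) :=
  {e | e ∈ G.edgeSet ∧ ∃ x y, e = s(x, y) ∧ x ∈ X ∧ y ∉ X}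

/-- A tight cut: every perfect matching meets it in exactly one edge. -/
def IsTightCut {V : Type u} (G : SimpleGraph V) (X : Set V) : Prop :=
  ∀ M : G.Subgraph, M.IsPerfectMatching → (cutEdges G X ∩ M.edgeSet).ncard = 1

/-- A separating cut: both contractions are matching covered. -/
def IsSeparatingCut {V : Type u} (G : SimpleGraph V) (X : Set V) : Prop :=
  MatchingCovered (contract G X) ∧ MatchingCovered (contract G Xᶜ)

/-- `(A, B)` is a bipartition of `G`. -/
def IsBipartition {V : Type u} (G : SimpleGraph V) (A B : Set V) : Prop :=
  A ∪ B = Set.univ ∧ A ∩ B = ∅ ∧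
    ∀ u v : V, G.Adj u v → (u ∈ A ∧ v ∈ B) ∨ (u ∈ B ∧ v ∈ A)

/-- A P-set of a bipartite matching covered graph with bipartition `(A, B)`. -/
def IsPSet {V : Type u} (G : SimpleGraph V) (A B X : Set V) : Prop :=
  (X ∩ A).ncard = (X ∩ B).ncard ∧
    ((∃! p : V × V, p.1 ∈ X ∩ A ∧ p.2 ∈ B \ X ∧ G.Adj p.1 p.2) ∨
     (∃! p : V × V, p.1 ∈ A \ X ∧ p.2 ∈ X ∩ B ∧ G.Adj p.1 p.2))

/-- The wheel `W_k`: a cycle of length `k` (on `Fin k`) plus a hub. -/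
def wheel (k : ℕ) : SimpleGraph (Fin k ⊕ Unit) :=
  SimpleGraph.fromRel (fun a b =>
    match a, b with
    | .inl i, .inl j => (i.val + 1) % k = j.val
    | .inl _, .inr _ => True
    | _, _ => False)

namespace Aux13

lemma key {k : ℕ} (m j : ℕ) (hm : m < k) (hj : j < k) :
    (j + (m + k - j) % k) % k = m := by
  rw [Nat.add_mod_mod]
  have h : j + (m + k - j) = m + k := by omega
  rw [h, Nat.add_mod_right, Nat.mod_eq_of_lt hm]

lemma uniq {k : ℕ} (j t s : ℕ) (ht : t < k) (hs : s < k)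
    (h : (j + t) % k = (j + s) % k) : t = s := by
  have h2 := Nat.ModEq.add_left_cancel' (n := k) j h
  have := h2
  unfold Nat.ModEq at this
  rwa [Nat.mod_eq_of_lt ht, Nat.mod_eq_of_lt hs] at this

lemma cancelr {k : ℕ} (a b c : ℕ) (ha : a < k) (hb : b < k)
    (h : (a + c) % k = (b + c) % k) : a = b := by
  have h2 := Nat.ModEq.add_right_cancel' (n := k) c h
  unfold Nat.ModEq at h2
  rwa [Nat.mod_eq_of_lt ha, Nat.mod_eq_of_lt hb] at h2

/-- distance from j to m around the cycle -/
def D {k : ℕ} (m j : Fin k) : ℕ := (m.val + k - j.val) % k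

lemma D_lt {k : ℕ} (m j : Fin k) : D m j < k := Nat.mod_lt _ m.pos

lemma D_spec {k : ℕ} (m j : Fin k) : (j.val + D m j) % k = m.val :=
  key m.val j.val m.isLt j.isLt

lemma D_eq_zero_iff {k : ℕ} (m j : Fin k) : D m j = 0 ↔ m = j := by
  constructor
  · intro h
    have h2 := D_spec m j
    rw [h, Nat.add_zero, Nat.mod_eq_of_lt j.isLt] at h2
    exact Fin.ext h2.symm
  · rintro rfl
    unfold D
    have : m.val + k - m.val = k := by omega
    rw [this, Nat.mod_self]

lemma D_unique {k : ℕ} (m j : Fin k) (t : ℕ) (ht : t < k)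
    (h : (j.val + t) % k = m.val) : D m j = t :=
  uniq j.val _ t (D_lt m j) ht (by rw [D_spec m j, h])

def fsucc {k : ℕ} (m : Fin k) : Fin k := ⟨(m.val + 1) % k, Nat.mod_lt _ m.pos⟩
def fpred {k : ℕ} (m : Fin k) : Fin k := ⟨(m.val + (k - 1)) % k, Nat.mod_lt _ m.pos⟩

lemma fsucc_fpred {k : ℕ} (m : Fin k) : fsucc (fpred m) = m := by
  apply Fin.ext
  show ((m.val + (k-1)) % k + 1) % k = m.val
  rw [Nat.mod_add_mod]
  have hk := m.pos
  have h : m.val + (k-1) + 1 = m.val + k := by omega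
  rw [h, Nat.add_mod_right, Nat.mod_eq_of_lt m.isLt]

lemma fpred_fsucc {k : ℕ} (m : Fin k) : fpred (fsucc m) = m := by
  apply Fin.ext
  show ((m.val + 1) % k + (k-1)) % k = m.val
  rw [Nat.mod_add_mod]
  have hk := m.pos
  have h : m.val + 1 + (k-1) = m.val + k := by omega
  rw [h, Nat.add_mod_right, Nat.mod_eq_of_lt m.isLt]

lemma D_fsucc {k : ℕ} (m j : Fin k) (h : D m j < k - 1) :
    D (fsucc m) j = D m j + 1 := by
  apply D_unique
  · omega
  · show (j.val + (D m j + 1)) % k = (m.val + 1) % k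
    conv_lhs => rw [← Nat.add_assoc, ← Nat.mod_add_mod, D_spec]

lemma D_fpred {k : ℕ} (m j : Fin k) (h : 1 ≤ D m j) :
    D (fpred m) j = D m j - 1 := by
  have hlt := D_lt m j
  apply D_unique
  · omega
  · show (j.val + (D m j - 1)) % k = (m.val + (k-1)) % k
    have hk := m.pos
    rw [← Nat.add_mod_right (j.val + (D m j - 1)) k]
    have h2 : j.val + (D m j - 1) + k = j.val + D m j + (k - 1) := by omega
    rw [h2, ← Nat.mod_add_mod, D_spec]

lemma fsucc_ne {k : ℕ} (hk : 2 ≤ k) (m : Fin k) : fsucc m ≠ m := by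
  intro h
  have h2 : (m.val + 1) % k = m.val := congrArg Fin.val h
  rcases Nat.lt_or_ge (m.val + 1) k with h3 | h3
  · rw [Nat.mod_eq_of_lt h3] at h2; omega
  · have h4 : m.val + 1 = k := by have := m.isLt; omega
    rw [h4, Nat.mod_self] at h2; omega

lemma fpred_ne {k : ℕ} (hk : 2 ≤ k) (m : Fin k) : fpred m ≠ m := by
  intro h
  have h2 := congrArg fsucc h
  rw [fsucc_fpred] at h2
  exact fsucc_ne hk m h2.symm

/-- wheel adjacency facts -/
lemma wheel_adj_rim {k : ℕ} (hk : 2 ≤ k) (m : Fin k) :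
    (wheel k).Adj (Sum.inl m) (Sum.inl (fsucc m)) := by
  rw [wheel, SimpleGraph.fromRel_adj]
  refine ⟨?_, Or.inl rfl⟩
  intro h
  exact fsucc_ne hk m (Sum.inl.inj h).symm

lemma wheel_adj_spoke {k : ℕ} (m : Fin k) :
    (wheel k).Adj (Sum.inl m) (Sum.inr ()) := by
  rw [wheel, SimpleGraph.fromRel_adj]
  exact ⟨by simp, Or.inl trivial⟩


/-- The matching function for the PM using spoke at j. -/
noncomputable def fj {k : ℕ} (j : Fin k) : Fin k ⊕ Unit → Fin k ⊕ Unit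
  | Sum.inr _ => Sum.inl j
  | Sum.inl m =>
    if m = j then Sum.inr ()
    else if D m j % 2 = 1 then Sum.inl (fsucc m) else Sum.inl (fpred m)

lemma fj_inr {k : ℕ} (j : Fin k) : fj j (Sum.inr ()) = Sum.inl j := rfl

lemma fj_self {k : ℕ} (j : Fin k) : fj j (Sum.inl j) = Sum.inr () := by
  simp [fj]

lemma fj_odd {k : ℕ} (j m : Fin k) (h : D m j % 2 = 1) :
    fj j (Sum.inl m) = Sum.inl (fsucc m) := by
  have hne : m ≠ j := by
    intro he; rw [(D_eq_zero_iff m j).2 he] at h; omega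
  simp [fj, hne, h]

lemma fj_even {k : ℕ} (j m : Fin k) (hne : m ≠ j) (h : D m j % 2 = 0) :
    fj j (Sum.inl m) = Sum.inl (fpred m) := by
  simp [fj, hne, h]

lemma fj_invol {k : ℕ} (hodd : k % 2 = 1) (j : Fin k) (v : Fin k ⊕ Unit) :
    fj j (fj j v) = v := by
  match v with
  | Sum.inr u => rw [fj_inr, fj_self]
  | Sum.inl m =>
    by_cases he : m = j
    · subst he; rw [fj_self, fj_inr]
    · have hD0 : D m j ≠ 0 := fun h => he ((D_eq_zero_iff m j).1 h)
      have hDlt : D m j < k := D_lt m j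
      by_cases hp : D m j % 2 = 1
      · rw [fj_odd j m hp]
        have hlt : D m j < k - 1 := by omega
        have h2 : D (fsucc m) j = D m j + 1 := D_fsucc m j hlt
        have hne2 : fsucc m ≠ j := by
          intro hh
          have := (D_eq_zero_iff (fsucc m) j).2 hh
          omega
        rw [fj_even j (fsucc m) hne2 (by omega), fpred_fsucc]
      · rw [fj_even j m he (by omega)]
        have h2 : D (fpred m) j = D m j - 1 := D_fpred m j (by omega)
        rw [fj_odd j (fpred m) (by omega), fsucc_fpred]

lemma fj_adj {k : ℕ} (hk : 5 ≤ k) (hodd : k % 2 = 1) (i j : Fin k) (hji : j ≠ i)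
    (v : Fin k ⊕ Unit) :
    ((wheel k).deleteEdges {s(Sum.inl i, Sum.inr ())}).Adj v (fj j v) := by
  have hspoke : ∀ m : Fin k, m ≠ i →
      s((Sum.inl m : Fin k ⊕ Unit), Sum.inr ()) ∉ ({s(Sum.inl i, Sum.inr ())} : Set (Sym2 (Fin k ⊕ Unit))) := by
    intro m hm h
    rw [Set.mem_singleton_iff, Sym2.eq_iff] at h
    rcases h with ⟨h1, _⟩ | ⟨h1, h2⟩
    · exact hm (Sum.inl.inj h1)
    · exact absurd h1 (by simp)
  have hrim : ∀ m n : Fin k,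
      s((Sum.inl m : Fin k ⊕ Unit), Sum.inl n) ∉ ({s(Sum.inl i, Sum.inr ())} : Set (Sym2 (Fin k ⊕ Unit))) := by
    intro m n h
    rw [Set.mem_singleton_iff, Sym2.eq_iff] at h
    rcases h with ⟨_, h2⟩ | ⟨h1, _⟩ <;> simp at *
  rw [SimpleGraph.deleteEdges_adj]
  match v with
  | Sum.inr u =>
    rw [fj_inr]
    refine ⟨((wheel k).adj_symm (wheel_adj_spoke j)), ?_⟩
    intro h
    rw [Set.mem_singleton_iff, Sym2.eq_iff] at h
    rcases h with ⟨h1, _⟩ | ⟨_, h2⟩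
    · exact absurd h1 (by simp)
    · exact hji (Sum.inl.inj h2)
  | Sum.inl m =>
    by_cases he : m = j
    · subst he
      rw [fj_self]
      exact ⟨wheel_adj_spoke m, hspoke m hji⟩
    · have hD0 : D m j ≠ 0 := fun h => he ((D_eq_zero_iff m j).1 h)
      by_cases hp : D m j % 2 = 1
      · rw [fj_odd j m hp]
        exact ⟨wheel_adj_rim (by omega) m, hrim m (fsucc m)⟩
      · rw [fj_even j m he (by omega)]
        refine ⟨?_, hrim m (fpred m)⟩
        have := wheel_adj_rim (k := k) (by omega) (fpred m)
        rw [fsucc_fpred] at this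
        exact this.symm

/-- Build a perfect matching subgraph from a fixed-point-free involution. -/
lemma pm_of_involution {V : Type*} (G : SimpleGraph V) (f : V → V)
    (hinv : ∀ v, f (f v) = v) (hadj : ∀ v, G.Adj v (f v)) :
    ∃ M : G.Subgraph, M.IsPerfectMatching ∧ ∀ a b, (M.Adj a b ↔ f a = b) := by
  refine ⟨⟨Set.univ, fun a b => f a = b, ?_, ?_, ?_⟩, ⟨?_, ?_⟩, ?_⟩
  · rintro a b rfl; exact hadj a
  · intro a b _; trivial
  · constructor; rintro a b rfl; exact hinv a
  · intro v _
    exact ⟨f v, rfl, fun w hw => Eq.symm hw⟩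
  · intro v; trivial
  · intro a b; exact Iff.rfl

lemma wheelPM {k : ℕ} (hk : 5 ≤ k) (hodd : k % 2 = 1) (i j : Fin k) (hji : j ≠ i) :
    ∃ M : ((wheel k).deleteEdges {s(Sum.inl i, Sum.inr ())}).Subgraph,
      M.IsPerfectMatching ∧ ∀ a b, (M.Adj a b ↔ fj j a = b) :=
  pm_of_involution _ (fj j) (fj_invol hodd j) (fj_adj hk hodd i j hji)


lemma G'_rim_adj {k : ℕ} (hk : 5 ≤ k) (i : Fin k) (m : Fin k) :
    ((wheel k).deleteEdges {s(Sum.inl i, Sum.inr ())}).Adj (Sum.inl m) (Sum.inl (fsucc m)) := by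
  rw [SimpleGraph.deleteEdges_adj]
  refine ⟨wheel_adj_rim (by omega) m, ?_⟩
  intro h
  rw [Set.mem_singleton_iff, Sym2.eq_iff] at h
  rcases h with ⟨_, h2⟩ | ⟨h1, _⟩ <;> simp at *

lemma conn {k : ℕ} (hk : 5 ≤ k) (i : Fin k) :
    ((wheel k).deleteEdges {s(Sum.inl i, Sum.inr ())}).Connected := by
  set G' := (wheel k).deleteEdges {s(Sum.inl i, Sum.inr ())} with hG'
  haveI : Nonempty (Fin k ⊕ Unit) := ⟨Sum.inr ()⟩
  have hstep : ∀ (t : ℕ) (m : Fin k),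
      G'.Reachable (Sum.inl m) (Sum.inl ⟨(m.val + t) % k, Nat.mod_lt _ m.pos⟩) := by
    intro t
    induction t with
    | zero =>
      intro m
      have : (⟨(m.val + 0) % k, Nat.mod_lt _ m.pos⟩ : Fin k) = m := by
        apply Fin.ext; simp [Nat.mod_eq_of_lt m.isLt]
      rw [this]
    | succ t ih =>
      intro m
      refine (ih m).trans ?_
      have h2 : (⟨(m.val + (t+1)) % k, Nat.mod_lt _ m.pos⟩ : Fin k) =
          fsucc ⟨(m.val + t) % k, Nat.mod_lt _ m.pos⟩ := by
        apply Fin.ext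
        show (m.val + (t+1)) % k = ((m.val + t) % k + 1) % k
        rw [Nat.mod_add_mod, Nat.add_assoc]
      rw [h2]
      exact (G'_rim_adj hk i _).reachable
  have hInl : ∀ m n : Fin k, G'.Reachable (Sum.inl m) (Sum.inl n) := by
    intro m n
    have := hstep (D n m) m
    have h2 : (⟨(m.val + D n m) % k, Nat.mod_lt _ m.pos⟩ : Fin k) = n := by
      apply Fin.ext; exact D_spec n m
    rwa [h2] at this
  have hhub : G'.Reachable (Sum.inl (fsucc i)) (Sum.inr ()) := by
    refine SimpleGraph.Adj.reachable ?_
    rw [hG', SimpleGraph.deleteEdges_adj]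
    refine ⟨wheel_adj_spoke _, ?_⟩
    intro h
    rw [Set.mem_singleton_iff, Sym2.eq_iff] at h
    rcases h with ⟨h1, _⟩ | ⟨h1, _⟩
    · exact fsucc_ne (by omega) i (Sum.inl.inj h1)
    · exact absurd h1 (by simp)
  constructor
  intro u v
  match u, v with
  | Sum.inl m, Sum.inl n => exact hInl m n
  | Sum.inl m, Sum.inr u => cases u; exact (hInl m (fsucc i)).trans hhub
  | Sum.inr u, Sum.inl n => cases u; exact hhub.symm.trans (hInl (fsucc i) n)
  | Sum.inr u, Sum.inr u' => cases u; cases u'; exact SimpleGraph.Reachable.refl _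

lemma card_wheel (k : ℕ) (hk : 5 ≤ k) : 2 ≤ Nat.card (Fin k ⊕ Unit) := by
  rw [Nat.card_sum]
  simp only [Nat.card_eq_fintype_card, Fintype.card_fin]
  omega

lemma exists_j {k : ℕ} (hk : 5 ≤ k) (i m : Fin k) :
    ∃ j : Fin k, j ≠ i ∧ D m j % 2 = 1 := by
  have hk0 := m.pos
  set j1 : Fin k := ⟨(m.val + (k-1)) % k, Nat.mod_lt _ m.pos⟩ with hj1
  set j3 : Fin k := ⟨(m.val + (k-3)) % k, Nat.mod_lt _ m.pos⟩ with hj3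
  have h1 : D m j1 = 1 := by
    apply D_unique m j1 1 (by omega)
    show ((m.val + (k-1)) % k + 1) % k = m.val
    rw [Nat.mod_add_mod]
    have h : m.val + (k-1) + 1 = m.val + k := by omega
    rw [h, Nat.add_mod_right, Nat.mod_eq_of_lt m.isLt]
  have h3 : D m j3 = 3 := by
    apply D_unique m j3 3 (by omega)
    show ((m.val + (k-3)) % k + 3) % k = m.val
    rw [Nat.mod_add_mod]
    have h : m.val + (k-3) + 3 = m.val + k := by omega
    rw [h, Nat.add_mod_right, Nat.mod_eq_of_lt m.isLt]
  have hne : j1 ≠ j3 := by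
    intro hh
    rw [hh] at h1
    omega
  by_cases h : j1 = i
  · exact ⟨j3, fun he => hne (h.trans he.symm), by rw [h3]⟩
  · exact ⟨j1, h, by rw [h1]⟩


lemma rim_not_removable {k : ℕ} (hk : 5 ≤ k) (hodd : k % 2 = 1) (i j : Fin k)
    (hij : (i.val + 1) % k = j.val) :
    ¬ Removable (wheel k) s(Sum.inl i, Sum.inl j) := by
  rintro ⟨he, hconn, hcard, hall⟩
  have hfpi : fpred i ≠ i := fpred_ne (by omega) i
  set G' := (wheel k).deleteEdges {s(Sum.inl i, Sum.inl j)} with hG'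
  have hsp : s((Sum.inl (fpred i) : Fin k ⊕ Unit), Sum.inr ()) ∈ G'.edgeSet := by
    rw [SimpleGraph.mem_edgeSet, hG', SimpleGraph.deleteEdges_adj]
    refine ⟨wheel_adj_spoke _, ?_⟩
    intro h
    rw [Set.mem_singleton_iff, Sym2.eq_iff] at h
    rcases h with ⟨_, h2⟩ | ⟨h1, _⟩ <;> simp at *
  obtain ⟨M, hM, hMe⟩ := hall _ hsp
  rw [SimpleGraph.Subgraph.mem_edgeSet] at hMe
  obtain ⟨w, hw, _⟩ := hM.1 (hM.2 (Sum.inl i))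
  have hwadj := M.adj_sub hw
  rw [hG', SimpleGraph.deleteEdges_adj] at hwadj
  obtain ⟨hadj, hnd⟩ := hwadj
  rw [wheel, SimpleGraph.fromRel_adj] at hadj
  obtain ⟨hne2, hr⟩ := hadj
  match w, hw, hnd, hr, hne2 with
  | Sum.inr u, hw, hnd, hr, hne2 =>
    cases u
    obtain ⟨w', hw', huniq'⟩ := hM.1 (hM.2 (Sum.inr ()))
    have e1 := huniq' _ (M.adj_symm hw)
    have e2 := huniq' _ (M.adj_symm hMe)
    rw [← e2] at e1
    exact hfpi (Sum.inl.inj e1).symm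
  | Sum.inl n, hw, hnd, hr, hne2 =>
    have hr' : (i.val + 1) % k = n.val ∨ (n.val + 1) % k = i.val := hr
    rcases hr' with h1 | h1
    · apply hnd
      have : n = j := Fin.ext (by rw [← h1, hij])
      rw [this]
      rfl
    · have hn : n = fpred i := by
        apply Fin.ext
        apply cancelr n.val (fpred i).val 1 n.isLt (fpred i).isLt
        rw [h1]
        have := congrArg Fin.val (fsucc_fpred i)
        exact this.symm
      subst hn
      obtain ⟨w'', hw'', huniq''⟩ := hM.1 (hM.2 (Sum.inl (fpred i)))
      have e1 := huniq'' _ (M.adj_symm hw)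
      have e2 := huniq'' _ hMe
      rw [← e2] at e1
      exact absurd e1 (by simp)

end Aux13


open Aux13 in
theorem stmt13 (k : ℕ) (hk : 5 ≤ k) (hodd : Odd k) :
    (∀ i j : Fin k, (wheel k).Adj (Sum.inl i) (Sum.inl j) →
        ¬ Removable (wheel k) s(Sum.inl i, Sum.inl j)) ∧
      (∀ i : Fin k, Removable (wheel k) s(Sum.inl i, Sum.inr ())) := by
  have hodd' : k % 2 = 1 := Nat.odd_iff.mp hodd
  constructor
  · intro i j hadj
    rw [wheel, SimpleGraph.fromRel_adj] at hadj
    obtain ⟨hne, hr⟩ := hadj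
    have hr' : (i.val + 1) % k = j.val ∨ (j.val + 1) % k = i.val := hr
    rcases hr' with h1 | h1
    · exact rim_not_removable hk hodd' i j h1
    · rw [Sym2.eq_swap]
      exact rim_not_removable hk hodd' j i h1
  · intro i
    refine ⟨(wheel k).mem_edgeSet.mpr (wheel_adj_spoke i), conn hk i, card_wheel k hk, ?_⟩
    intro e
    induction e using Sym2.ind with
    | _ a b =>
      intro he
      rw [SimpleGraph.mem_edgeSet] at he
      match a, b, he with
      | Sum.inl m, Sum.inl n, he =>
        rw [SimpleGraph.deleteEdges_adj] at he
        obtain ⟨hadj, _⟩ := he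
        rw [wheel, SimpleGraph.fromRel_adj] at hadj
        obtain ⟨hne, hr⟩ := hadj
        have hr' : (m.val + 1) % k = n.val ∨ (n.val + 1) % k = m.val := hr
        rcases hr' with h1 | h1
        · obtain ⟨j, hji, hDodd⟩ := exists_j hk i m
          obtain ⟨M, hM, hMadj⟩ := wheelPM hk hodd' i j hji
          refine ⟨M, hM, ?_⟩
          rw [SimpleGraph.Subgraph.mem_edgeSet, hMadj, fj_odd j m hDodd]
          congr 1
          exact Fin.ext h1
        · obtain ⟨j, hji, hDodd⟩ := exists_j hk i n
          obtain ⟨M, hM, hMadj⟩ := wheelPM hk hodd' i j hji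
          refine ⟨M, hM, ?_⟩
          rw [SimpleGraph.Subgraph.mem_edgeSet]
          apply M.adj_symm
          rw [hMadj, fj_odd j n hDodd]
          congr 1
          exact Fin.ext h1
      | Sum.inl m, Sum.inr u, he =>
        cases u
        rw [SimpleGraph.deleteEdges_adj] at he
        obtain ⟨hadj, hnd⟩ := he
        have hmi : m ≠ i := by
          intro hh
          exact hnd (by rw [hh]; rfl)
        obtain ⟨M, hM, hMadj⟩ := wheelPM hk hodd' i m hmi
        exact ⟨M, hM, by rw [SimpleGraph.Subgraph.mem_edgeSet, hMadj, fj_self]⟩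
      | Sum.inr u, Sum.inl n, he =>
        cases u
        rw [SimpleGraph.deleteEdges_adj] at he
        obtain ⟨hadj, hnd⟩ := he
        have hni : n ≠ i := by
          intro hh
          apply hnd
          rw [hh, Sym2.eq_swap]
          rfl
        obtain ⟨M, hM, hMadj⟩ := wheelPM hk hodd' i n hni
        exact ⟨M, hM, by rw [SimpleGraph.Subgraph.mem_edgeSet, hMadj, fj_inr]⟩
      | Sum.inr u, Sum.inr u', he =>
        cases u; cases u'
        exact absurd rfl he.ne
end

section
/- Let G be a bicritical graph and let C be a 2-separation cut of G. Then both C-contractions of G are bicritical. -/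
open SimpleGraph

universe u

section AuxLemmas


lemma hasPM_of_invol {V : Type*} (G : SimpleGraph V) (f : V → V)
    (hinv : ∀ v, f (f v) = v) (hadj : ∀ v, G.Adj v (f v)) : HasPM G := by
  refine ⟨⟨Set.univ, fun a b => G.Adj a b ∧ b = f a, fun {a b} h => h.1,
    fun {a b} _ => trivial, ?_⟩, ?_⟩
  · constructor
    rintro a b ⟨h1, rfl⟩
    exact ⟨h1.symm, by rw [hinv]⟩
  · rw [SimpleGraph.Subgraph.isPerfectMatching_iff]
    intro v
    exact ⟨f v, ⟨hadj v, rfl⟩, fun w hw => hw.2⟩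

lemma hasPM_of_invol_on {V : Type*} (G : SimpleGraph V) (s : Set V) (f : V → V)
    (hmaps : ∀ x ∈ s, f x ∈ s) (hinv : ∀ x ∈ s, f (f x) = x)
    (hadj : ∀ x ∈ s, G.Adj x (f x)) : HasPM (G.induce s) := by
  refine hasPM_of_invol _ (fun x => ⟨f x.1, hmaps x.1 x.2⟩) (fun v => ?_) (fun v => ?_)
  · exact Subtype.ext (hinv v.1 v.2)
  · exact hadj v.1 v.2

lemma partner_exists {V : Type*} {G : SimpleGraph V} (W : Set V)
    (h : HasPM (G.induce W)) : ∃ g : V → V, (∀ x, x ∉ W → g x = x) ∧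
      (∀ x ∈ W, g x ∈ W) ∧ (∀ x ∈ W, g (g x) = x) ∧ (∀ x ∈ W, G.Adj x (g x)) := by
  classical
  obtain ⟨M, hM⟩ := h
  rw [SimpleGraph.Subgraph.isPerfectMatching_iff] at hM
  set p : ∀ x : W, W := fun x => (hM x).choose with hp
  have hadj : ∀ x : W, M.Adj x (p x) := fun x => (hM x).choose_spec.1
  have huniq : ∀ x y : W, M.Adj x y → y = p x := fun x y h => (hM x).choose_spec.2 y h
  refine ⟨fun x => if hx : x ∈ W then (p ⟨x, hx⟩ : V) else x, fun x hx => dif_neg hx,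
    fun x hx => ?_, fun x hx => ?_, fun x hx => ?_⟩ <;> dsimp only
  · rw [dif_pos hx]; exact (p ⟨x, hx⟩).2
  · rw [dif_pos hx, dif_pos (p ⟨x, hx⟩).2]
    have := huniq (p ⟨x, hx⟩) ⟨x, hx⟩ (hadj ⟨x, hx⟩).symm
    rw [← this]
  · rw [dif_pos hx]
    exact M.adj_sub (hadj ⟨x, hx⟩)

lemma even_card_invol_aux {α : Type*} [DecidableEq α] :
    ∀ (n : ℕ) (s : Finset α), s.card = n → ∀ f : α → α, (∀ x ∈ s, f x ∈ s) →
      (∀ x ∈ s, f (f x) = x) → (∀ x ∈ s, f x ≠ x) → Even s.card := by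
  intro n
  induction n using Nat.strong_induction_on with
  | _ n ih =>
    intro s hcard f hmem hinv hne
    rcases s.eq_empty_or_nonempty with rfl | ⟨x, hx⟩
    · simp
    · have hfx : f x ∈ s := hmem x hx
      have hfxne : f x ≠ x := hne x hx
      set s' : Finset α := (s.erase x).erase (f x) with hs'
      have hsub : ∀ y ∈ s', y ∈ s ∧ y ≠ x ∧ y ≠ f x := by
        intro y hy
        simp only [hs', Finset.mem_erase] at hy
        exact ⟨hy.2.2, hy.2.1, hy.1⟩
      have hcard' : s'.card = n - 2 := by
        rw [hs', Finset.card_erase_of_mem (Finset.mem_erase.2 ⟨hfxne, hfx⟩),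
          Finset.card_erase_of_mem hx, hcard]
        omega
      have hn2 : 2 ≤ n := by
        rw [← hcard]
        have : ({f x, x} : Finset α) ⊆ s := by
          intro y hy; simp at hy; rcases hy with rfl | rfl <;> assumption
        calc 2 = ({f x, x} : Finset α).card := (Finset.card_pair hfxne).symm
        _ ≤ s.card := Finset.card_le_card this
      have hmem' : ∀ y ∈ s', f y ∈ s' := by
        intro y hy
        obtain ⟨hys, hyx, hyfx⟩ := hsub y hy
        simp only [hs', Finset.mem_erase]
        refine ⟨fun h => hyx ?_, fun h => hyfx ?_, hmem y hys⟩
        · rw [← hinv y hys, h, hinv x hx]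
        · rw [← hinv y hys, h]
      have : Even s'.card := by
        refine ih (n-2) (by omega) s' hcard' f hmem' (fun y hy => hinv y (hsub y hy).1)
          (fun y hy => hne y (hsub y hy).1)
      rw [hcard]
      rw [hcard'] at this
      rcases this with ⟨k, hk⟩; exact ⟨k+1, by omega⟩
      

lemma even_ncard_of_invol {V : Type*} [Finite V] (A : Set V) (g : V → V)
    (hm : ∀ x ∈ A, g x ∈ A) (hi : ∀ x ∈ A, g (g x) = x) (hn : ∀ x ∈ A, g x ≠ x) :
    Even A.ncard := by
  classical
  have := Fintype.ofFinite V
  rw [Set.ncard_eq_toFinset_card']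
  exact even_card_invol_aux _ A.toFinset rfl g
    (fun x hx => Set.mem_toFinset.2 (hm x (Set.mem_toFinset.1 hx)))
    (fun x hx => hi x (Set.mem_toFinset.1 hx))
    (fun x hx => hn x (Set.mem_toFinset.1 hx))

/-- Parity transfer: for an involution `g` on `W` without fixed points,
the parity of `|S ∩ W|` equals the parity of the set of `x ∈ S ∩ W` with `g x ∉ S`. -/
lemma parity_transfer {V : Type*} [Finite V] (W S : Set V) (g : V → V)
    (hmaps : ∀ x ∈ W, g x ∈ W) (hinv : ∀ x ∈ W, g (g x) = x)
    (hne : ∀ x ∈ W, g x ≠ x) :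
    (Even ((S ∩ W).ncard) ↔ Even ({x | x ∈ W ∧ x ∈ S ∧ g x ∉ S}.ncard)) := by
  classical
  set A : Set V := {x | x ∈ W ∧ x ∈ S ∧ g x ∈ S} with hA
  set B : Set V := {x | x ∈ W ∧ x ∈ S ∧ g x ∉ S} with hB
  have hunion : S ∩ W = A ∪ B := by
    ext x
    simp only [hA, hB, Set.mem_inter_iff, Set.mem_union, Set.mem_setOf_eq]
    tauto
  have hdisj : Disjoint A B := by
    rw [Set.disjoint_left]
    rintro x ⟨_, _, h1⟩ ⟨_, _, h2⟩
    exact h2 h1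
  have hAeven : Even A.ncard := by
    refine even_ncard_of_invol A g (fun x hx => ?_) (fun x hx => hinv x hx.1)
      (fun x hx => hne x hx.1)
    obtain ⟨h1, h2, h3⟩ := hx
    exact ⟨hmaps x h1, h3, by rw [hinv x h1]; exact h2⟩
  rw [hunion, Set.ncard_union_eq hdisj (Set.toFinite A) (Set.toFinite B)]
  rcases hAeven with ⟨k, hk⟩
  constructor
  · rintro ⟨m, hm⟩; exact ⟨m - k, by omega⟩
  · rintro ⟨m, hm⟩; exact ⟨k + m, by omega⟩

lemma toContract_eq_inl {V : Type u} {X : Set V} {x : V} (hx : x ∉ X) :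
    toContract X x = Sum.inl ⟨x, hx⟩ := by
  unfold toContract
  exact dif_neg hx

lemma toContract_eq_inr {V : Type u} {X : Set V} {x : V} (hx : x ∈ X) :
    toContract X x = Sum.inr () := by
  unfold toContract
  exact dif_pos hx

lemma contract_adj_inl_inl {V : Type u} (G : SimpleGraph V) (X : Set V) {x y : V}
    (hx : x ∉ X) (hy : y ∉ X) (h : G.Adj x y) :
    (contract G X).Adj (Sum.inl ⟨x, hx⟩) (Sum.inl ⟨y, hy⟩) := by
  rw [contract, SimpleGraph.fromRel_adj]
  refine ⟨by simp [h.ne], Or.inl ⟨x, y, h, (toContract_eq_inl hx).symm,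
    (toContract_eq_inl hy).symm⟩⟩

lemma contract_adj_inl_inr {V : Type u} (G : SimpleGraph V) (X : Set V) {x y : V}
    (hx : x ∉ X) (hy : y ∈ X) (h : G.Adj x y) :
    (contract G X).Adj (Sum.inl ⟨x, hx⟩) (Sum.inr ()) := by
  rw [contract, SimpleGraph.fromRel_adj]
  exact ⟨by simp, Or.inl ⟨x, y, h, (toContract_eq_inl hx).symm,
    (toContract_eq_inr hy).symm⟩⟩
lemma contract_bicritical {V : Type u} [Finite V] (G : SimpleGraph V)
    (hG : Bicritical G) (u v : V) (huv : u ≠ v)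
    (X : Set V) (hu : u ∈ X) (hv : v ∉ X)
    (h1 : (X \ {u}).Nonempty) (h2 : (Xᶜ \ {v}).Nonempty)
    (hcut : ∀ a ∈ X \ {u}, ∀ b ∈ Xᶜ \ {v}, ¬ G.Adj a b) :
    Bicritical (contract G X) := by
  classical
  -- partner for the base deletion {u, v}
  obtain ⟨g₀, hg₀ext, hg₀maps, hg₀inv, hg₀adj⟩ :=
    partner_exists ({u, v}ᶜ : Set V) (hG.2 u v huv)
  have hg₀ne : ∀ x ∈ ({u, v}ᶜ : Set V), g₀ x ≠ x := fun x hx => (hg₀adj x hx).ne'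
  have hmemW₀ : ∀ x : V, x ∈ ({u, v}ᶜ : Set V) ↔ (x ≠ u ∧ x ≠ v) := by
    intro x
    simp [Set.mem_compl_iff]
  -- |X \ {u}| is even
  have hXeven : Even ((X \ {u}).ncard) := by
    have hpt := parity_transfer ({u, v}ᶜ : Set V) X g₀ hg₀maps hg₀inv hg₀ne
    have hB : {x | x ∈ ({u, v}ᶜ : Set V) ∧ x ∈ X ∧ g₀ x ∉ X} = ∅ := by
      ext x
      simp only [Set.mem_setOf_eq, Set.mem_empty_iff_false, iff_false, not_and]
      intro hxW hxX hgx
      obtain ⟨hxu, hxv⟩ := (hmemW₀ x).1 hxW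
      obtain ⟨hgu, hgv⟩ := (hmemW₀ _).1 (hg₀maps x hxW)
      exact hcut x ⟨hxX, hxu⟩ (g₀ x) ⟨hgx, hgv⟩ (hg₀adj x hxW)
    have hXW : X ∩ ({u, v}ᶜ : Set V) = X \ {u} := by
      ext x
      rw [Set.mem_inter_iff, hmemW₀]
      constructor
      · rintro ⟨hX, hxu, _⟩; exact ⟨hX, hxu⟩
      · rintro ⟨hX, hxu⟩; exact ⟨hX, hxu, fun h => hv (h ▸ hX)⟩
    rw [hXW] at hpt
    rw [hpt, hB]
    simp
  -- |Xᶜ \ {v}| is even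
  have hXceven : Even ((Xᶜ \ {v}).ncard) := by
    have hpt := parity_transfer ({u, v}ᶜ : Set V) Xᶜ g₀ hg₀maps hg₀inv hg₀ne
    have hB : {x | x ∈ ({u, v}ᶜ : Set V) ∧ x ∈ Xᶜ ∧ g₀ x ∉ Xᶜ} = ∅ := by
      ext x
      simp only [Set.mem_setOf_eq, Set.mem_empty_iff_false, iff_false, not_and,
        Set.mem_compl_iff, not_not]
      intro hxW hxX hgx
      obtain ⟨hxu, hxv⟩ := (hmemW₀ x).1 hxW
      obtain ⟨hgu, hgv⟩ := (hmemW₀ _).1 (hg₀maps x hxW)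
      exact hcut (g₀ x) ⟨hgx, hgu⟩ x ⟨hxX, hxv⟩ (hg₀adj x hxW).symm
    have hXW : Xᶜ ∩ ({u, v}ᶜ : Set V) = Xᶜ \ {v} := by
      ext x
      rw [Set.mem_inter_iff, hmemW₀]
      constructor
      · rintro ⟨hX, _, hxv⟩; exact ⟨hX, hxv⟩
      · rintro ⟨hX, hxv⟩; exact ⟨hX, fun h => hX (h ▸ hu), hxv⟩
    rw [hXW] at hpt
    rw [hpt, hB]
    simp
  constructor
  · -- cardinality bound
    have h2' : 2 ≤ (Xᶜ \ {v}).ncard := by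
      obtain ⟨k, hk⟩ := hXceven
      have : 0 < (Xᶜ \ {v}).ncard := (Set.ncard_pos (Set.toFinite _)).2 h2
      omega
    have hvX : v ∈ Xᶜ := hv
    have hXc : 3 ≤ (Xᶜ : Set V).ncard := by
      have := Set.ncard_diff_singleton_add_one hvX (Set.toFinite _)
      omega
    rw [Nat.card_sum, Nat.card_coe_set_eq]
    have hcu : Nat.card Unit = 1 := Nat.card_unique
    omega
  · -- bicriticality
    intro a b hab
    -- key fact about a deletion pair {p, q} with p ∈ X (used for both orders)
    -- Case with contracted vertex
    have key_c : ∀ (α' : ↥(Xᶜ)),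
        HasPM ((contract G X).induce ({Sum.inl α', Sum.inr ()}ᶜ :
          Set (↥(Xᶜ) ⊕ Unit))) := by
      intro α'
      set β : V := (α' : V) with hβdef
      have hβ : β ∉ X := α'.2
      have huβ : u ≠ β := fun h => hβ (h ▸ hu)
      obtain ⟨g, hgext, hgmaps, hginv, hgadj⟩ :=
        partner_exists ({u, β}ᶜ : Set V) (hG.2 u β huβ)
      have hgne : ∀ x ∈ ({u, β}ᶜ : Set V), g x ≠ x := fun x hx => (hgadj x hx).ne'
      have hmemW : ∀ x : V, x ∈ ({u, β}ᶜ : Set V) ↔ (x ≠ u ∧ x ≠ β) := by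
        intro x; simp [Set.mem_compl_iff]
      set B : Set V := {x | x ∈ ({u, β}ᶜ : Set V) ∧ x ∈ X ∧ g x ∉ X} with hBdef
      have hBsub : B ⊆ {g v} := by
        rintro x ⟨hxW, hxX, hgx⟩
        obtain ⟨hxu, hxβ⟩ := (hmemW x).1 hxW
        have hgv : g x = v := by
          by_contra hne
          exact hcut x ⟨hxX, hxu⟩ (g x) ⟨hgx, hne⟩ (hgadj x hxW)
        have : x = g v := by rw [← hgv, hginv x hxW]
        simp [this]
      have hBeven : Even B.ncard := by
        have hpt := parity_transfer ({u, β}ᶜ : Set V) X g hgmaps hginv hgne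
        have hXW : X ∩ ({u, β}ᶜ : Set V) = X \ {u} := by
          ext x
          rw [Set.mem_inter_iff, hmemW]
          constructor
          · rintro ⟨hX, hxu, _⟩; exact ⟨hX, hxu⟩
          · rintro ⟨hX, hxu⟩; exact ⟨hX, hxu, fun h => hβ (h ▸ hX)⟩
        rw [hXW] at hpt
        exact hpt.1 hXeven
      have hBempty : B = ∅ := by
        have hle : B.ncard ≤ 1 := by
          calc B.ncard ≤ ({g v} : Set V).ncard :=
                Set.ncard_le_ncard hBsub (Set.toFinite _)
          _ = 1 := Set.ncard_singleton _
        obtain ⟨k, hk⟩ := hBeven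
        have : B.ncard = 0 := by omega
        exact (Set.ncard_eq_zero (Set.toFinite _)).1 this
      have hXcmaps : ∀ x, x ∈ ({u, β}ᶜ : Set V) → x ∉ X → g x ∉ X := by
        intro x hxW hxX hgX
        have : g x ∈ B := ⟨hgmaps x hxW, hgX, by rw [hginv x hxW]; exact hxX⟩
        rw [hBempty] at this
        exact this
      -- build the involution
      refine hasPM_of_invol_on _ _
        (Sum.elim (fun w => if h : ((w : V) ∈ ({u, β}ᶜ : Set V)) ∧ g (w : V) ∉ X
          then Sum.inl ⟨g (w : V), h.2⟩ else Sum.inl w) (fun _ => Sum.inr ()))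
        ?_ ?_ ?_
      all_goals
        rintro (w | y) hx <;>
          simp only [Set.mem_compl_iff, Set.mem_insert_iff, Set.mem_singleton_iff,
            not_or] at hx
      · -- maps into the set, inl case
        obtain ⟨hxa, hxb⟩ := hx
        have hwβ : (w : V) ≠ β := fun h => hxa (by
          apply congrArg Sum.inl
          exact Subtype.ext h)
        have hwu : (w : V) ≠ u := fun h => (h ▸ w.2) hu
        have hwW : (w : V) ∈ ({u, β}ᶜ : Set V) := (hmemW _).2 ⟨hwu, hwβ⟩
        have hgX : g (w : V) ∉ X := hXcmaps _ hwW w.2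
        rw [Sum.elim_inl, dif_pos ⟨hwW, hgX⟩]
        simp only [Set.mem_compl_iff, Set.mem_insert_iff, Set.mem_singleton_iff, not_or]
        refine ⟨fun h => ?_, by simp⟩
        have : g (w : V) = β := by
          have := congrArg (Sum.elim (fun (z : ↥(Xᶜ)) => (z : V)) (fun _ => u)) h
          simpa using this
        exact ((hmemW _).1 (hgmaps _ hwW)).2 this
      · -- maps into the set, inr case: impossible
        exact absurd trivial hx.2
      · -- involution, inl case
        obtain ⟨hxa, hxb⟩ := hx
        have hwβ : (w : V) ≠ β := fun h => hxa (by
          apply congrArg Sum.inl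
          exact Subtype.ext h)
        have hwu : (w : V) ≠ u := fun h => (h ▸ w.2) hu
        have hwW : (w : V) ∈ ({u, β}ᶜ : Set V) := (hmemW _).2 ⟨hwu, hwβ⟩
        have hgX : g (w : V) ∉ X := hXcmaps _ hwW w.2
        rw [Sum.elim_inl, dif_pos ⟨hwW, hgX⟩, Sum.elim_inl,
          dif_pos ⟨hgmaps _ hwW, by rw [hginv _ hwW]; exact w.2⟩]
        apply congrArg Sum.inl
        exact Subtype.ext (hginv _ hwW)
      · exact absurd trivial hx.2
      · -- adjacency, inl case
        obtain ⟨hxa, hxb⟩ := hx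
        have hwβ : (w : V) ≠ β := fun h => hxa (by
          apply congrArg Sum.inl
          exact Subtype.ext h)
        have hwu : (w : V) ≠ u := fun h => (h ▸ w.2) hu
        have hwW : (w : V) ∈ ({u, β}ᶜ : Set V) := (hmemW _).2 ⟨hwu, hwβ⟩
        have hgX : g (w : V) ∉ X := hXcmaps _ hwW w.2
        rw [Sum.elim_inl, dif_pos ⟨hwW, hgX⟩]
        exact contract_adj_inl_inl G X w.2 hgX (hgadj _ hwW)
      · exact absurd trivial hx.2
    -- now case on a, b
    match a, b with
    | Sum.inr y, Sum.inr y' => exact absurd (by cases y; cases y'; rfl) hab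
    | Sum.inl α', Sum.inr y => cases y; exact key_c α'
    | Sum.inr y, Sum.inl α' =>
      cases y
      rw [Set.pair_comm]
      exact key_c α'
    | Sum.inl α', Sum.inl β' =>
      -- main case: both deleted vertices are ordinary vertices of the contraction
      have hαX : (α' : V) ∉ X := α'.2
      have hβX : (β' : V) ∉ X := β'.2
      have hαβ : (α' : V) ≠ (β' : V) := fun h => hab (congrArg Sum.inl (Subtype.ext h))
      obtain ⟨g, hgext, hgmaps, hginv, hgadj⟩ :=
        partner_exists ({(α' : V), (β' : V)}ᶜ : Set V) (hG.2 _ _ hαβ)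
      have hgne : ∀ x ∈ ({(α' : V), (β' : V)}ᶜ : Set V), g x ≠ x :=
        fun x hx => (hgadj x hx).ne'
      have hmemW : ∀ x : V, x ∈ ({(α' : V), (β' : V)}ᶜ : Set V) ↔
          (x ≠ (α' : V) ∧ x ≠ (β' : V)) := by
        intro x; simp [Set.mem_compl_iff]
      set W : Set V := ({(α' : V), (β' : V)}ᶜ : Set V) with hWdef
      set B : Set V := {x | x ∈ W ∧ x ∈ X ∧ g x ∉ X} with hBdef
      have hBsub : B ⊆ {u, g v} := by
        rintro x ⟨hxW, hxX, hgx⟩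
        by_cases hxu : x = u
        · exact Or.inl hxu
        · right
          have hgv : g x = v := by
            by_contra hne
            exact hcut x ⟨hxX, hxu⟩ (g x) ⟨hgx, hne⟩ (hgadj x hxW)
          have : x = g v := by rw [← hgv, hginv x hxW]
          simp [this]
      have hBodd : ¬ Even B.ncard := by
        have hpt := parity_transfer W X g hgmaps hginv hgne
        have hXW : X ∩ W = X := by
          apply Set.inter_eq_self_of_subset_left
          intro x hxX
          exact (hmemW x).2 ⟨fun h => hαX (h ▸ hxX), fun h => hβX (h ▸ hxX)⟩
        rw [hXW] at hpt
        have hXcard : (X \ {u}).ncard + 1 = X.ncard :=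
          Set.ncard_diff_singleton_add_one hu (Set.toFinite _)
        obtain ⟨k, hk⟩ := hXeven
        intro hBe
        obtain ⟨m, hm⟩ := hpt.2 hBe
        omega
      have hBcard : B.ncard = 1 := by
        have hle : B.ncard ≤ 2 := by
          calc B.ncard ≤ ({u, g v} : Set V).ncard :=
                Set.ncard_le_ncard hBsub (Set.toFinite _)
          _ ≤ ({g v} : Set V).ncard + 1 := Set.ncard_insert_le _ _
          _ = 2 := by rw [Set.ncard_singleton]
        rw [Nat.not_even_iff] at hBodd
        omega
      obtain ⟨x₀, hx₀⟩ := Set.ncard_eq_one.1 hBcard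
      have hx₀B : x₀ ∈ B := by rw [hx₀]; rfl
      obtain ⟨hx₀W, hx₀X, hw₀X⟩ := hx₀B
      have hw₀W : g x₀ ∈ W := hgmaps x₀ hx₀W
      have hswap : ∀ w ∈ W, w ∉ X → g w ∈ X → w = g x₀ := by
        intro w hwW hwX hgwX
        have hmem : g w ∈ B := ⟨hgmaps w hwW, hgwX, by rw [hginv w hwW]; exact hwX⟩
        rw [hx₀] at hmem
        rw [← hmem, hginv w hwW]
      refine hasPM_of_invol_on _ _
        (Sum.elim (fun w => if h : ((w : V) ∈ W)
          then (if hX : g (w : V) ∈ X then Sum.inr ()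
            else Sum.inl ⟨g (w : V), hX⟩)
          else Sum.inl w) (fun _ => Sum.inl ⟨g x₀, hw₀X⟩))
        ?_ ?_ ?_
      all_goals
        rintro (w | y) hx <;>
          simp only [Set.mem_compl_iff, Set.mem_insert_iff, Set.mem_singleton_iff,
            not_or] at hx ⊢
      · -- maps into the set, inl case
        obtain ⟨hxa, hxb⟩ := hx
        have hwW : (w : V) ∈ W := by
          refine (hmemW _).2 ⟨fun h => hxa ?_, fun h => hxb ?_⟩ <;>
            exact congrArg Sum.inl (Subtype.ext h)
        rw [Sum.elim_inl, dif_pos hwW]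
        by_cases hgX : g (w : V) ∈ X
        · rw [dif_pos hgX]
          simp
        · rw [dif_neg hgX]
          constructor <;> intro h
          · refine ((hmemW _).1 (hgmaps _ hwW)).1 ?_
            have := congrArg (Sum.elim (fun (z : ↥(Xᶜ)) => (z : V)) (fun _ => u)) h
            simpa using this
          · refine ((hmemW _).1 (hgmaps _ hwW)).2 ?_
            have := congrArg (Sum.elim (fun (z : ↥(Xᶜ)) => (z : V)) (fun _ => u)) h
            simpa using this
      · -- maps into the set, inr case
        rw [Sum.elim_inr]
        constructor <;> intro h
        · refine ((hmemW _).1 hw₀W).1 ?_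
          have := congrArg (Sum.elim (fun (z : ↥(Xᶜ)) => (z : V)) (fun _ => u)) h
          simpa using this
        · refine ((hmemW _).1 hw₀W).2 ?_
          have := congrArg (Sum.elim (fun (z : ↥(Xᶜ)) => (z : V)) (fun _ => u)) h
          simpa using this
      · -- involution, inl case
        obtain ⟨hxa, hxb⟩ := hx
        have hwW : (w : V) ∈ W := by
          refine (hmemW _).2 ⟨fun h => hxa ?_, fun h => hxb ?_⟩ <;>
            exact congrArg Sum.inl (Subtype.ext h)
        rw [Sum.elim_inl, dif_pos hwW]
        by_cases hgX : g (w : V) ∈ X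
        · rw [dif_pos hgX, Sum.elim_inr]
          have : (w : V) = g x₀ := hswap _ hwW w.2 hgX
          exact congrArg Sum.inl (Subtype.ext this.symm)
        · rw [dif_neg hgX, Sum.elim_inl, dif_pos (hgmaps _ hwW),
            dif_neg (by rw [hginv _ hwW]; exact w.2)]
          exact congrArg Sum.inl (Subtype.ext (hginv _ hwW))
      · -- involution, inr case
        cases y
        rw [Sum.elim_inr, Sum.elim_inl, dif_pos hw₀W,
          dif_pos (by rw [hginv _ hx₀W]; exact hx₀X)]
      · -- adjacency, inl case
        obtain ⟨hxa, hxb⟩ := hx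
        have hwW : (w : V) ∈ W := by
          refine (hmemW _).2 ⟨fun h => hxa ?_, fun h => hxb ?_⟩ <;>
            exact congrArg Sum.inl (Subtype.ext h)
        rw [Sum.elim_inl, dif_pos hwW]
        by_cases hgX : g (w : V) ∈ X
        · rw [dif_pos hgX]
          exact contract_adj_inl_inr G X w.2 hgX (hgadj _ hwW)
        · rw [dif_neg hgX]
          exact contract_adj_inl_inl G X w.2 hgX (hgadj _ hwW)
      · -- adjacency, inr case
        cases y
        rw [Sum.elim_inr]
        exact (contract_adj_inl_inr G X hw₀X hx₀X (hgadj x₀ hx₀W).symm).symm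

end AuxLemmas

theorem stmt16 {V : Type u} [Finite V] (G : SimpleGraph V)
    (hG : Bicritical G) (u v : V) (huv : u ≠ v)
    (hdisc : ¬ (G.induce ({u, v}ᶜ : Set V)).Connected)
    (heven : ∀ c : (G.induce ({u, v}ᶜ : Set V)).ConnectedComponent,
      Even (Nat.card c.supp))
    (X : Set V) (hu : u ∈ X) (hv : v ∉ X)
    (h1 : (X \ {u}).Nonempty) (h2 : (Xᶜ \ {v}).Nonempty)
    (hcut : ∀ a ∈ X \ {u}, ∀ b ∈ Xᶜ \ {v}, ¬ G.Adj a b) :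
    Bicritical (contract G X) ∧ Bicritical (contract G Xᶜ) := by
  refine ⟨contract_bicritical G hG u v huv X hu hv h1 h2 hcut, ?_⟩
  have hu' : u ∉ Xᶜ := fun h => h hu
  have h1' : (Xᶜᶜ \ {u}).Nonempty := by rw [compl_compl]; exact h1
  have hcut' : ∀ a ∈ Xᶜ \ {v}, ∀ b ∈ Xᶜᶜ \ {u}, ¬ G.Adj a b := by
    intro a ha b hb hadj
    rw [compl_compl] at hb
    exact hcut b hb a ha hadj.symm
  exact contract_bicritical G hG v u huv.symm Xᶜ hv hu' h2 h1' hcut'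
end
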